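/- Let A ∈ ℝ^{n×n}, b ∈ ℝⁿ, and h > 0. If rank C_j(A,b) < j (i.e., b, Ab, …, A^{j−1}b are linearly dependent), then rank C_j(e^{Ah}, b) < j, where C_j(M,b) = [b, Mb, …, M^{j−1}b]. -/

import Mathlib

open Matrix BigOperators

/-- The truncated controllability matrix `C_j(M,b) = [b, Mb, …, M^{j−1} b]`. -/
def ctrb {n : ℕ} (M : Matrix (Fin n) (Fin n) ℝ) (b : Fin n → ℝ) (j : ℕ) :
    Matrix (Fin n) (Fin j) ℝ :=
  fun i q => (M ^ (q : ℕ)).mulVec b i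

namespace RankCtrbAux

open Submodule

variable {n : ℕ} (A : Matrix (Fin n) (Fin n) ℝ) (b : Fin n → ℝ)

/-- Krylov subspace generated by the first `m` powers. -/
noncomputable def W (m : ℕ) : Submodule ℝ (Fin n → ℝ) :=
  Submodule.span ℝ ((fun i : ℕ => (A ^ i).mulVec b) '' Set.Iio m)

lemma W_mono : Monotone (W A b) := fun _ _ hab =>
  Submodule.span_mono (Set.image_mono (Set.Iio_subset_Iio hab))

lemma pow_mem_W {i m : ℕ} (hi : i < m) : (A ^ i).mulVec b ∈ W A b m :=
  Submodule.subset_span ⟨i, hi, rfl⟩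

lemma rank_ctrb_eq (M : Matrix (Fin n) (Fin n) ℝ) (j : ℕ) :
    (ctrb M b j).rank = Module.finrank ℝ (W M b j) := by
  have hset : Set.range (ctrb M b j).col = (fun i : ℕ => (M ^ i).mulVec b) '' Set.Iio j := by
    ext x
    constructor
    · rintro ⟨q, rfl⟩
      exact ⟨(q : ℕ), q.isLt, rfl⟩
    · rintro ⟨i, hi, rfl⟩
      exact ⟨⟨i, hi⟩, rfl⟩
  rw [Matrix.rank_eq_finrank_span_cols, hset]
  rfl

lemma mulVec_mem_W_succ {m : ℕ} {x : Fin n → ℝ} (hx : x ∈ W A b m) :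
    A.mulVec x ∈ W A b (m + 1) := by
  induction hx using Submodule.span_induction with
  | mem y hy =>
      obtain ⟨i, hi, rfl⟩ := hy
      rw [Matrix.mulVec_mulVec, ← pow_succ']
      exact pow_mem_W A b (Nat.succ_lt_succ hi)
  | zero => simpa [Matrix.mulVec_zero] using (W A b (m+1)).zero_mem
  | add y z _ _ hy hz => simpa [Matrix.mulVec_add] using add_mem hy hz
  | smul c y _ hy => simpa [Matrix.mulVec_smul] using smul_mem _ c hy

/-- If the Krylov chain stabilizes at `k`, all powers lie in `W k`. -/
lemma pow_mem_of_stab {k : ℕ} (hst : W A b k = W A b (k + 1)) (i : ℕ) :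
    (A ^ i).mulVec b ∈ W A b k := by
  induction i with
  | zero =>
      have hb : (A ^ 0).mulVec b ∈ W A b (k + 1) := pow_mem_W A b (Nat.succ_pos k)
      rwa [← hst] at hb
  | succ i ih =>
      have : A.mulVec ((A ^ i).mulVec b) ∈ W A b (k + 1) := mulVec_mem_W_succ A b ih
      rw [← hst] at this
      rwa [Matrix.mulVec_mulVec, ← pow_succ'] at this

lemma exists_stab {j : ℕ} (hr : Module.finrank ℝ (W A b j) < j) :
    ∃ k < j, W A b k = W A b (k + 1) := by
  by_contra hcon
  push_neg at hcon
  have key : ∀ k ≤ j, k ≤ Module.finrank ℝ (W A b k) := by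
    intro k hk
    induction k with
    | zero => exact Nat.zero_le _
    | succ k ih =>
        have hk' : k < j := hk
        have hlt : W A b k < W A b (k + 1) :=
          lt_of_le_of_ne (W_mono A b (Nat.le_succ k)) (hcon k hk')
        have := Submodule.finrank_lt_finrank_of_lt hlt
        omega
  have := key j le_rfl
  omega

/-- Any polynomial in `A` maps `W k` into itself, given stabilization. -/
lemma aeval_mulVec_mem {k : ℕ} (hst : W A b k = W A b (k + 1))
    (p : Polynomial ℝ) {x : Fin n → ℝ} (hx : x ∈ W A b k) :
    (Polynomial.aeval A p).mulVec x ∈ W A b k := by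
  have hA : ∀ y ∈ W A b k, A.mulVec y ∈ W A b k := by
    intro y hy
    have := mulVec_mem_W_succ A b hy
    rwa [← hst] at this
  have hpow : ∀ (i : ℕ), ∀ y ∈ W A b k, (A ^ i).mulVec y ∈ W A b k := by
    intro i
    induction i with
    | zero => intro y hy; simpa [Matrix.one_mulVec] using hy
    | succ i ih =>
        intro y hy
        have := hA _ (ih y hy)
        rwa [Matrix.mulVec_mulVec, ← pow_succ'] at this
  induction p using Polynomial.induction_on' with
  | add p q hp hq =>
      simpa [map_add, Matrix.add_mulVec] using add_mem hp hq
  | monomial i c =>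
      have : (Polynomial.aeval A (Polynomial.monomial i c)) = c • A ^ i := by
        simp [Polynomial.aeval_monomial, Algebra.smul_def]
      rw [this, Matrix.smul_mulVec]
      exact smul_mem _ c (hpow i x hx)

/-- The matrix exponential is a polynomial in `A`. -/
lemma exp_mem_adjoin (h : ℝ) :
    ∃ p : Polynomial ℝ, NormedSpace.exp (h • A) = Polynomial.aeval A p := by
  letI : NormedRing (Matrix (Fin n) (Fin n) ℝ) := Matrix.linftyOpNormedRing
  letI : NormedAlgebra ℝ (Matrix (Fin n) (Fin n) ℝ) := Matrix.linftyOpNormedAlgebra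
  have hmem : NormedSpace.exp (h • A) ∈ Algebra.adjoin ℝ ({A} : Set (Matrix (Fin n) (Fin n) ℝ)) := by
    set S : Subalgebra ℝ (Matrix (Fin n) (Fin n) ℝ) := Algebra.adjoin ℝ {A}
    have hAS : A ∈ S := Algebra.subset_adjoin rfl
    have hterm : ∀ i : ℕ, ((i.factorial : ℝ))⁻¹ • (h • A) ^ i ∈ S := fun i =>
      S.smul_mem (pow_mem (S.smul_mem hAS h) i) _
    have hsum : HasSum (fun i : ℕ => ((i.factorial : ℝ))⁻¹ • (h • A) ^ i) (NormedSpace.exp (h • A)) := by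
      have hs : Summable (fun i : ℕ => ((i.factorial : ℝ))⁻¹ • (h • A) ^ i) :=
        NormedSpace.expSeries_summable' (𝕂 := ℝ) (h • A)
      have := hs.hasSum
      rwa [NormedSpace.exp_eq_tsum (𝕂 := ℝ)]
    have hclosed : IsClosed (S : Set (Matrix (Fin n) (Fin n) ℝ)) := by
      have : IsClosed (Subalgebra.toSubmodule S : Set (Matrix (Fin n) (Fin n) ℝ)) :=
        Submodule.closed_of_finiteDimensional _
      exact this
    refine hclosed.mem_of_tendsto hsum (Filter.Eventually.of_forall ?_)
    intro s
    exact Submodule.sum_mem (Subalgebra.toSubmodule S) fun i _ => hterm i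
  rw [Algebra.adjoin_singleton_eq_range_aeval] at hmem
  obtain ⟨p, hp⟩ := hmem
  exact ⟨p, hp.symm⟩

end RankCtrbAux

/-- If `rank C_j(A,b) < j`, then `rank C_j(e^{Ah}, b) < j` for any `h > 0`. -/
theorem rank_ctrb_exp_lt {n : ℕ} (j : ℕ) (A : Matrix (Fin n) (Fin n) ℝ) (b : Fin n → ℝ)
    (h : ℝ) (hh : 0 < h) (hrank : (ctrb A b j).rank < j) :
    (ctrb (NormedSpace.exp (h • A)) b j).rank < j := by
  open RankCtrbAux in
  have hrA : Module.finrank ℝ (W A b j) < j := by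
    rwa [rank_ctrb_eq] at hrank
  obtain ⟨k, hkj, hst⟩ := exists_stab A b hrA
  obtain ⟨p, hp⟩ := exp_mem_adjoin A h
  set E := NormedSpace.exp (h • A) with hE
  -- every power of E applied to b lies in W A b k
  have hpowE : ∀ m : ℕ, (E ^ m).mulVec b ∈ W A b k := by
    intro m
    induction m with
    | zero =>
        have hb : (A ^ 0).mulVec b ∈ W A b k := pow_mem_of_stab A b hst 0
        simpa using hb
    | succ m ih =>
        have h4 := aeval_mulVec_mem A b hst p ih
        rw [← hp] at h4
        have : E.mulVec ((E ^ m).mulVec b) ∈ W A b k := h4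
        rwa [Matrix.mulVec_mulVec, ← pow_succ'] at this
  -- hence the span of the columns of ctrb E b j is inside W A b k
  have hsub : W E b j ≤ W A b k := by
    rw [W]
    apply Submodule.span_le.mpr
    rintro x ⟨i, _, rfl⟩
    exact hpowE i
  have h1 : (ctrb E b j).rank = Module.finrank ℝ (W E b j) := rank_ctrb_eq b E j
  have h2 : Module.finrank ℝ (W E b j) ≤ Module.finrank ℝ (W A b k) :=
    Submodule.finrank_mono hsub
  have h3 : Module.finrank ℝ (W A b k) ≤ Module.finrank ℝ (W A b j) :=
    Submodule.finrank_mono (W_mono A b (le_of_lt hkj))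
  omega
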